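/- Let A be a finite set with at least two elements, linearly ordered by <, and let ⊑ denote the induced antilexicographic order on A^n (x ⊏ y iff there is s with x_i = y_i for all i > s and x_s < y_s). Let π be a permutation of {1,…,n} and σ a permutation of {1,…,m}, and let f : A^n → A^m be given by f(x₁,…,x_n) = (x_{i₁},…,x_{i_m}) for some i₁,…,i_m ∈ {1,…,n}. Then f is monotone from (A^n, ⊑_π) to (A^m, ⊑_σ) — where x ⊑_π y iff (x_{π(1)},…,x_{π(n)}) ⊑ (y_{π(1)},…,y_{π(n)}) — if and only if the numbers j_s = π^{-1}(i_{σ(s)}) for s = 1,…,m satisfy: (i) j_m = n, and (ii) for all s < m, if j_s = k < n then {k+1,…,n} ⊆ {j_{s+1},…,j_m}. -/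

import Mathlib

/-- Strict antilexicographic order on tuples induced by a linear order on `A`:
`x ⊏ y` iff there is `s` with `x s < y s` and `x t = y t` for all `t > s`. -/
def antilexLT {A : Type*} [LT A] {n : Nat} (x y : Fin n → A) : Prop :=
  ∃ s : Fin n, x s < y s ∧ ∀ t : Fin n, s < t → x t = y t

/-- Reflexive antilexicographic order. -/
def antilexLE {A : Type*} [LT A] {n : Nat} (x y : Fin n → A) : Prop :=
  x = y ∨ antilexLT x y

theorem key {A : Type*} [LinearOrder A] (hA : Nontrivial A) {n m : Nat}
    (j : Fin (m+1) → Fin (n+1)) :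
    (∀ x y : Fin (n+1) → A, antilexLE x y → antilexLE (x ∘ j) (y ∘ j)) ↔
    (j (Fin.last m) = Fin.last n ∧ ∀ s : Fin (m+1), s < Fin.last m →
      j s < Fin.last n → ∀ l : Fin (n+1), j s < l → ∃ t, s < t ∧ j t = l) := by
  obtain ⟨a, b, hab⟩ : ∃ a b : A, a < b := by
    obtain ⟨a, b, h⟩ := hA.exists_pair_ne
    rcases h.lt_or_gt with h' | h'
    · exact ⟨a, b, h'⟩
    · exact ⟨b, a, h'⟩
  constructor
  · intro hmono
    constructor
    · by_contra h
      have hlt : j (Fin.last m) < Fin.last n := lt_of_le_of_ne (Fin.le_last _) h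
      set x : Fin (n+1) → A := fun i => if i = j (Fin.last m) then b else a with hx
      set y : Fin (n+1) → A := fun i => if i = Fin.last n then b else a with hy
      have hxy : antilexLE x y := by
        right
        refine ⟨Fin.last n, ?_, ?_⟩
        · simp only [hx, hy, if_pos rfl, if_neg hlt.ne']
          exact hab
        · intro t ht
          exact absurd ht (not_lt.mpr (Fin.le_last t))
      rcases hmono x y hxy with heq | ⟨u, hu, hall⟩
      · have := congrFun heq (Fin.last m)
        simp only [Function.comp, hx, hy, if_pos rfl, if_neg h] at this
        exact hab.ne' this
      · simp only [Function.comp, hx, hy] at hu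
        split_ifs at hu with h1 h2 h2
        · exact absurd hu (lt_irrefl _)
        · exact absurd hu hab.not_gt
        · -- j u ≠ j (last m), j u = last n
          have hune : u ≠ Fin.last m := by
            intro he; exact h1 (he ▸ rfl)
          have hult : u < Fin.last m := lt_of_le_of_ne (Fin.le_last u) hune
          have := hall (Fin.last m) hult
          simp only [Function.comp, hx, hy, if_pos rfl, if_neg h] at this
          exact hab.ne' this
        · exact absurd hu (lt_irrefl _)
    · intro s hs hjs l hl
      by_contra h
      push_neg at h
      set x : Fin (n+1) → A := fun i => if i = j s then b else a with hx
      set y : Fin (n+1) → A := fun i => if i = l then b else a with hy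
      have hxy : antilexLE x y := by
        right
        refine ⟨l, ?_, ?_⟩
        · simp only [hx, hy, if_pos rfl, if_neg hl.ne']
          exact hab
        · intro t ht
          simp only [hx, hy, if_neg (hl.trans ht).ne', if_neg ht.ne']
      rcases hmono x y hxy with heq | ⟨u, hu, hall⟩
      · have := congrFun heq s
        simp only [Function.comp, hx, hy, if_pos rfl, if_neg hl.ne] at this
        exact hab.ne' this
      · simp only [Function.comp, hx, hy] at hu
        split_ifs at hu with h1 h2 h2
        · exact absurd hu (lt_irrefl _)
        · exact absurd hu hab.not_gt
        · -- j u ≠ j s, j u = l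
          have hus : ¬ s < u := fun hc => h u hc h2
          have hune : u ≠ s := fun he => h1 (he ▸ h2 ▸ rfl)
          have hult : u < s := lt_of_le_of_ne (not_lt.mp hus) hune
          have := hall s hult
          simp only [Function.comp, hx, hy, if_pos rfl, if_neg hl.ne] at this
          exact hab.ne' this
        · exact absurd hu (lt_irrefl _)
  · rintro ⟨h1, h2⟩ x y hxy
    rcases hxy with rfl | ⟨s, hs, hagree⟩
    · exact Or.inl rfl
    by_cases heq : x ∘ j = y ∘ j
    · exact Or.inl heq
    right
    set T : Finset (Fin (m+1)) := Finset.univ.filter (fun u => x (j u) ≠ y (j u)) with hT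
    have hne : T.Nonempty := by
      obtain ⟨u, hu⟩ := Function.ne_iff.mp heq
      exact ⟨u, by simp only [hT, Finset.mem_filter, Finset.mem_univ, true_and]; simpa [Function.comp] using hu⟩
    set u := T.max' hne with hu
    have humem : x (j u) ≠ y (j u) := by
      have := T.max'_mem hne
      simpa [hT] using this
    have hmax : ∀ t, x (j t) ≠ y (j t) → t ≤ u := fun t ht =>
      T.le_max' t (by simp [hT, ht])
    have habove : ∀ t, u < t → (x ∘ j) t = (y ∘ j) t := by
      intro t ht
      by_contra hc
      exact absurd (hmax t hc) (not_le.mpr ht)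
    have hjus : j u ≤ s := by
      by_contra hc
      exact humem (hagree (j u) (not_le.mp hc))
    rcases eq_or_lt_of_le hjus with he | hlt
    · exact ⟨u, by simpa [Function.comp, he] using hs, habove⟩
    · exfalso
      have hjlt : j u < Fin.last n := lt_of_lt_of_le hlt (Fin.le_last s)
      have hune : u ≠ Fin.last m := by
        intro he
        rw [he, h1] at hlt
        exact absurd (Fin.le_last s) (not_le.mpr hlt)
      obtain ⟨t, hut, hjt⟩ := h2 u (lt_of_le_of_ne (Fin.le_last u) hune) hjlt s hlt
      have : x (j t) ≠ y (j t) := by rw [hjt]; exact hs.ne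
      exact absurd (hmax t this) (not_le.mpr hut)

/-- Characterization of monotone coordinate projections between permuted
antilexicographic orders on powers of a linearly ordered set. -/
theorem stmt13 {A : Type*} [Fintype A] [LinearOrder A] (hA : Nontrivial A)
    {n m : Nat} (π : Equiv.Perm (Fin (n + 1))) (σ : Equiv.Perm (Fin (m + 1)))
    (idx : Fin (m + 1) → Fin (n + 1)) :
    (∀ x y : Fin (n + 1) → A, antilexLE (x ∘ π) (y ∘ π) →
        antilexLE ((fun s => x (idx s)) ∘ σ) ((fun s => y (idx s)) ∘ σ)) ↔
    ((π.symm (idx (σ (Fin.last m))) = Fin.last n) ∧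
      ∀ s : Fin (m + 1), s < Fin.last m →
        π.symm (idx (σ s)) < Fin.last n →
          ∀ l : Fin (n + 1), π.symm (idx (σ s)) < l →
            ∃ t : Fin (m + 1), s < t ∧ π.symm (idx (σ t)) = l) := by

  have hk := key (A := A) hA (fun s => π.symm (idx (σ s)))
  rw [← hk]
  constructor
  · intro H x y hxy
    have h1 : (x ∘ ⇑π.symm) ∘ ⇑π = x := by funext i; simp
    have h2 : (y ∘ ⇑π.symm) ∘ ⇑π = y := by funext i; simp
    have := H (x ∘ ⇑π.symm) (y ∘ ⇑π.symm) (by rw [h1, h2]; exact hxy)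
    simpa [Function.comp_def] using this
  · intro H x y hxy
    have := H (x ∘ ⇑π) (y ∘ ⇑π) hxy
    have e1 : (x ∘ ⇑π) ∘ (fun s => π.symm (idx (σ s))) = (fun s => x (idx s)) ∘ ⇑σ := by
      funext t; simp [Function.comp]
    have e2 : (y ∘ ⇑π) ∘ (fun s => π.symm (idx (σ s))) = (fun s => y (idx s)) ∘ ⇑σ := by
      funext t; simp [Function.comp]
    rwa [e1, e2] at this
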